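/- For all positive integers k and l, the sequence c^{k,l}(0), c^{k,l}(1), ..., c^{k,l}(kl) is unimodal, where c^{k,l}(n) is the number of compositions of n with at most k parts each of size at most l. -/

import Mathlib

open Finset

/-- Integer-valued count of compositions of `n : ℤ` (zero for negative `n`)
with at most `k` parts, each in `[1, l]`. -/
def cZ (l : ℕ) : ℕ → ℤ → ℤ
  | 0, n => if n = 0 then 1 else 0
  | k+1, n => if n ≤ 0 then (if n = 0 then 1 else 0)
      else ∑ i ∈ Finset.Icc 1 l, cZ l k (n - (i : ℕ))

lemma cZ_neg (l k : ℕ) {m : ℤ} (h : m < 0) : cZ l k m = 0 := by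
  cases k <;> simp [cZ, h.ne, h.le]

lemma cZ_zero (l k : ℕ) : cZ l k 0 = 1 := by
  cases k <;> simp [cZ]

lemma cZ_of_pos (l k : ℕ) {m : ℤ} (h : 0 < m) :
    cZ l (k+1) m = ∑ i ∈ Finset.Icc 1 l, cZ l k (m - (i : ℕ)) := by
  simp [cZ, not_le.mpr h, h.ne']

lemma cZ_nonneg (l : ℕ) : ∀ (k : ℕ) (m : ℤ), 0 ≤ cZ l k m := by
  intro k
  induction k with
  | zero => intro m; by_cases h : m = 0 <;> simp [cZ, h]
  | succ k ih =>
      intro m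
      rcases le_or_gt m 0 with h | h
      · rcases eq_or_lt_of_le h with h' | h'
        · simp [h', cZ_zero]
        · simp [cZ_neg l _ h']
      · rw [cZ_of_pos l k h]
        exact Finset.sum_nonneg fun i _ => ih _

/-- Window sum of `cZ` of length `l` ending at `M`. -/
def Wf (l k : ℕ) (M : ℤ) : ℤ := ∑ j ∈ Finset.range l, cZ l k (M - (j : ℕ))

lemma Wf_diff (l k : ℕ) (M : ℤ) :
    Wf l k M - Wf l k (M - 1) = cZ l k M - cZ l k (M - (l : ℕ)) := by
  have h := Finset.sum_range_sub' (fun j => cZ l k (M - (j : ℕ))) l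
  simp only [Nat.cast_zero, sub_zero] at h
  rw [← h, Wf, Wf, ← Finset.sum_sub_distrib]
  apply Finset.sum_congr rfl
  intro j _
  have e : M - 1 - (j : ℕ) = M - ((j : ℕ) + 1 : ℕ) := by push_cast; ring
  rw [e]

lemma cZ_eq_W (l k : ℕ) {m : ℤ} (h : 0 < m) : cZ l (k+1) m = Wf l k (m - 1) := by
  rw [cZ_of_pos l k h, Wf]
  rw [show Finset.Icc 1 l = Finset.Ico 1 (l+1) from by rw [Finset.Ico_add_one_right_eq_Icc]]
  rw [Finset.sum_Ico_eq_sum_range]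
  simp only [Nat.add_sub_cancel]
  apply Finset.sum_congr rfl
  intro j _
  congr 1
  push_cast
  ring

lemma cZ_pos (l : ℕ) (hl : 0 < l) :
    ∀ (k : ℕ) (m : ℤ), 0 ≤ m → m ≤ ((k * l : ℕ) : ℤ) → 1 ≤ cZ l k m := by
  intro k
  induction k with
  | zero =>
      intro m h0 h1
      simp only [Nat.zero_mul, Nat.cast_zero] at h1
      have : m = 0 := le_antisymm h1 h0
      simp [this, cZ_zero]
  | succ k ih =>
      intro m h0 h1
      rcases eq_or_lt_of_le h0 with h' | h'
      · simp [← h', cZ_zero]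
      · rw [cZ_of_pos l k h']
        have hm1 : 1 ≤ m.toNat := by omega
        have htn : (m.toNat : ℤ) = m := Int.toNat_of_nonneg h0
        set i0 : ℕ := min l m.toNat with hi0
        have hmem : i0 ∈ Finset.Icc 1 l := by
          simp only [Finset.mem_Icc]; omega
        have hKL : (k+1) * l = k * l + l := by ring
        rw [hKL] at h1
        rw [Nat.cast_add] at h1
        have harg0 : 0 ≤ m - (i0 : ℕ) := by omega
        have harg1 : m - (i0 : ℕ) ≤ ((k * l : ℕ) : ℤ) := by
          rcases le_or_gt l m.toNat with hh | hh
          · have hi : i0 = l := by omega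
            rw [hi]; omega
          · have hi : (i0 : ℤ) = m := by omega
            rw [hi]; simp; positivity
        have hterm := ih _ harg0 harg1
        exact le_trans hterm
          (Finset.single_le_sum (f := fun i : ℕ => cZ l k (m - (i : ℕ)))
            (fun i _ => cZ_nonneg l k _) hmem)

/-- Single sign change of `m ↦ cZ l k m - cZ l k (m - l)`. -/
lemma ssc (l : ℕ) (hl : 0 < l) (k : ℕ) :
    ∃ t : ℤ, (l : ℤ) - 1 ≤ t ∧
      (∀ m ≤ t, cZ l k (m - (l : ℕ)) ≤ cZ l k m) ∧
      (∀ m, t < m → cZ l k m ≤ cZ l k (m - (l : ℕ))) := by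
  induction k with
  | zero =>
      refine ⟨(l : ℤ) - 1, le_refl _, ?_, ?_⟩
      · intro m hm
        have h : m - (l : ℕ) < 0 := by omega
        rw [cZ_neg l 0 h]
        exact cZ_nonneg l 0 m
      · intro m hm
        have hm0 : m ≠ 0 := by omega
        have h : cZ l 0 m = 0 := by simp [cZ, hm0]
        rw [h]
        exact cZ_nonneg l 0 _
  | succ k ih =>
      obtain ⟨t, ht, h1, h2⟩ := ih
      set W : ℤ → ℤ := Wf l k with hW
      have Wup : ∀ M, M ≤ t → W (M - 1) ≤ W M := by
        intro M hM
        have hd := Wf_diff l k M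
        have hia := h1 M hM
        simp only [hW]
        linarith
      have Wdn : ∀ M, t < M → W M ≤ W (M - 1) := by
        intro M hM
        have hd := Wf_diff l k M
        have hia := h2 M hM
        simp only [hW]
        linarith
      have WupChain : ∀ (j : ℕ) (M : ℤ), M ≤ t → W (M - (j : ℕ)) ≤ W M := by
        intro j
        induction j with
        | zero => intro M _; simp
        | succ j ihj =>
            intro M hM
            have hs : W (M - ((j : ℕ) + 1 : ℕ)) ≤ W (M - (j : ℕ)) := by
              have e : M - ((j : ℕ) + 1 : ℕ) = (M - (j : ℕ)) - 1 := by push_cast; ring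
              rw [e]
              exact Wup _ (by omega)
            exact le_trans hs (ihj M hM)
      have WdnChain : ∀ (j : ℕ) (M : ℤ), t ≤ M → W (M + (j : ℕ)) ≤ W M := by
        intro j
        induction j with
        | zero => intro M _; simp
        | succ j ihj =>
            intro M hM
            have hs : W (M + ((j : ℕ) + 1 : ℕ)) ≤ W (M + (j : ℕ)) := by
              have e : M + (j : ℕ) = (M + ((j : ℕ) + 1 : ℕ)) - 1 := by push_cast; ring
              rw [e]
              exact Wdn _ (by omega)
            exact le_trans hs (ihj M hM)
      set D : ℤ → ℤ := fun m => W (m - 1) - W (m - (l : ℕ) - 1) with hD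
      have D1 : ∀ m, m ≤ t + 1 → 0 ≤ D m := by
        intro m hm
        have hc : W ((m - 1) - (l : ℕ)) ≤ W (m - 1) := WupChain l (m - 1) (by omega)
        have e : (m - 1) - (l : ℕ) = m - (l : ℕ) - 1 := by ring
        rw [e] at hc
        simp only [hD]
        linarith
      have D2 : ∀ m, t + (l : ℕ) + 1 ≤ m → D m ≤ 0 := by
        intro m hm
        have hc : W ((m - (l : ℕ) - 1) + (l : ℕ)) ≤ W (m - (l : ℕ) - 1) :=
          WdnChain l (m - (l : ℕ) - 1) (by omega)
        have e : (m - (l : ℕ) - 1) + (l : ℕ) = m - 1 := by ring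
        rw [e] at hc
        simp only [hD]
        linarith
      have Dstep : ∀ m, t + 1 ≤ m → m ≤ t + (l : ℕ) → D (m + 1) ≤ D m := by
        intro m hm1 hm2
        have a1 : W m ≤ W (m - 1) := Wdn m (by omega)
        have a2 : W (m - (l : ℕ) - 1) ≤ W (m - (l : ℕ)) := by
          have := Wup (m - (l : ℕ)) (by omega)
          have e : m - (l : ℕ) - 1 = (m - (l : ℕ)) - 1 := by ring
          rw [e]
          exact this
        simp only [hD]
        have e1 : m + 1 - 1 = m := by ring
        have e2 : m + 1 - (l : ℕ) - 1 = m - (l : ℕ) := by ring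
        rw [e1, e2]
        linarith
      have DChain : ∀ (j : ℕ) (m : ℤ), t + 1 ≤ m → m + (j : ℕ) ≤ t + (l : ℕ) + 1 →
          D (m + (j : ℕ)) ≤ D m := by
        intro j
        induction j with
        | zero => intro m _ _; simp
        | succ j ihj =>
            intro m hm1 hm2
            push_cast at hm2
            have hs : D (m + ((j : ℕ) + 1 : ℕ)) ≤ D (m + (j : ℕ)) := by
              have e : m + ((j : ℕ) + 1 : ℕ) = (m + (j : ℕ)) + 1 := by push_cast; ring
              rw [e]
              exact Dstep _ (by omega) (by omega)
            exact le_trans hs (ihj m hm1 (by omega))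
      classical
      set S : Finset ℤ := (Finset.Icc (t+2) (t + (l : ℕ) + 1)).filter (fun m => 0 ≤ D m)
        with hS
      set ts : ℤ := if h : S.Nonempty then S.max' h else t + 1 with hts
      have hSdef : ∀ x, x ∈ S ↔ ((t+2 ≤ x ∧ x ≤ t + (l : ℕ) + 1) ∧ 0 ≤ D x) := by
        intro x
        rw [hS]
        simp [Finset.mem_filter, Finset.mem_Icc, and_assoc]
      have hts_ge : t + 1 ≤ ts := by
        rw [hts]
        split_ifs with h
        · have hmem := (hSdef _).mp (S.max'_mem h)
          omega
        · exact le_refl _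
      have hts_le : ts ≤ t + (l : ℕ) + 1 := by
        rw [hts]
        split_ifs with h
        · have hmem := (hSdef _).mp (S.max'_mem h)
          omega
        · omega
      have Ka : ∀ m, m ≤ ts → 0 ≤ D m := by
        intro m hm
        rcases le_or_gt m (t+1) with h | h
        · exact D1 m h
        · have hne : S.Nonempty := by
            by_contra hc
            rw [hts, dif_neg hc] at hm
            omega
          have hmax : ts = S.max' hne := by rw [hts, dif_pos hne]
          have htsS : ts ∈ S := hmax ▸ S.max'_mem hne
          have hDts : 0 ≤ D ts := ((hSdef _).mp htsS).2
          have hled : D ts ≤ D m := by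
            have e : m + (((ts - m).toNat : ℕ) : ℤ) = ts := by
              have h0 : 0 ≤ ts - m := by omega
              rw [Int.toNat_of_nonneg h0]; ring
            calc D ts = D (m + (((ts - m).toNat : ℕ) : ℤ)) := by rw [e]
              _ ≤ D m := DChain _ m (by omega) (by rw [e]; exact hts_le)
          linarith
      have Kb : ∀ m, ts < m → D m ≤ 0 := by
        intro m hm
        rcases le_or_gt (t + (l : ℕ) + 1) m with h | h
        · exact D2 m h
        · have hnotS : m ∉ S := by
            intro hc
            have hne : S.Nonempty := ⟨m, hc⟩
            have hle := S.le_max' m hc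
            rw [hts, dif_pos hne] at hm
            omega
          have : ¬ (0 ≤ D m) := by
            intro hc
            exact hnotS ((hSdef m).mpr ⟨⟨by omega, by omega⟩, hc⟩)
          linarith
      refine ⟨max (l : ℤ) ts, le_trans (by omega) (le_max_left _ _), ?_, ?_⟩
      · intro m hm
        rcases lt_trichotomy m (l : ℤ) with hml | hml | hml
        · rw [cZ_neg l (k+1) (by omega)]
          exact cZ_nonneg _ _ _
        · have e : m - (l : ℕ) = 0 := by omega
          rw [e, cZ_zero]
          apply cZ_pos l hl (k+1) m (by omega)
          rw [hml]
          have : l ≤ (k+1) * l := by nlinarith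
          exact_mod_cast this
        · have hm0 : (0:ℤ) < m := by omega
          have hml0 : (0:ℤ) < m - (l : ℕ) := by omega
          rw [cZ_eq_W l k hm0, cZ_eq_W l k hml0]
          have hmts : m ≤ ts := by
            rcases le_total (l : ℤ) ts with h | h
            · rwa [max_eq_right h] at hm
            · rw [max_eq_left h] at hm; omega
          have hKam := Ka m hmts
          simp only [hD] at hKam
          show W (m - (l : ℕ) - 1) ≤ W (m - 1)
          linarith
      · intro m hm
        have hml : (l : ℤ) < m := lt_of_le_of_lt (le_max_left _ _) hm
        have htsm : ts < m := lt_of_le_of_lt (le_max_right _ _) hm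
        have hm0 : (0:ℤ) < m := by omega
        have hml0 : (0:ℤ) < m - (l : ℕ) := by omega
        rw [cZ_eq_W l k hm0, cZ_eq_W l k hml0]
        have hKbm := Kb m htsm
        simp only [hD] at hKbm
        show W (m - 1) ≤ W (m - (l : ℕ) - 1)
        linarith

/-- Nat-valued version of `cZ`. -/
def cN (l : ℕ) : ℕ → ℕ → ℕ
  | 0, n => if n = 0 then 1 else 0
  | k+1, n => if n = 0 then 1 else ∑ i ∈ Finset.Icc 1 (min l n), cN l k (n - i)

lemma cZ_coe (l : ℕ) : ∀ (k n : ℕ), cZ l k (n : ℤ) = (cN l k n : ℤ) := by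
  intro k
  induction k with
  | zero =>
      intro n
      by_cases h : n = 0 <;> simp [cZ, cN, h]
  | succ k ih =>
      intro n
      rcases Nat.eq_zero_or_pos n with h0 | h0
      · subst h0; simp [cZ_zero, cN]
      · rw [cZ_of_pos l k (by exact_mod_cast h0)]
        have hcN : cN l (k+1) n = ∑ i ∈ Finset.Icc 1 (min l n), cN l k (n - i) := by
          simp [cN, Nat.pos_iff_ne_zero.mp h0]
        rw [hcN]
        have hsub : Finset.Icc 1 (min l n) ⊆ Finset.Icc 1 l :=
          Finset.Icc_subset_Icc_right (min_le_left l n)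
        have hzero : ∀ i ∈ Finset.Icc 1 l, i ∉ Finset.Icc 1 (min l n) →
            cZ l k ((n : ℤ) - (i : ℕ)) = 0 := by
          intro i hi hni
          simp only [Finset.mem_Icc] at hi hni
          have : n < i := by omega
          exact cZ_neg l k (by omega)
        rw [← Finset.sum_subset hsub hzero]
        rw [Nat.cast_sum]
        apply Finset.sum_congr rfl
        intro i hi
        simp only [Finset.mem_Icc] at hi
        have hin : i ≤ n := le_trans hi.2 (min_le_right l n)
        have e : (n : ℤ) - (i : ℕ) = ((n - i : ℕ) : ℤ) := by omega
        rw [e, ih]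

/-- Finset model of restricted compositions. -/
def FS (l : ℕ) : ℕ → ℕ → Finset (List ℕ)
  | 0, n => if n = 0 then {[]} else ∅
  | k+1, n => if n = 0 then {[]} else
      (Finset.Icc 1 (min l n)).biUnion fun i => (FS l k (n - i)).image (List.cons i)

lemma mem_FS (l : ℕ) : ∀ (k n : ℕ) (c : List ℕ),
    c ∈ FS l k n ↔ (c.length ≤ k ∧ (∀ x ∈ c, 1 ≤ x ∧ x ≤ l) ∧ c.sum = n) := by
  intro k
  induction k with
  | zero =>
      intro n c
      by_cases h : n = 0
      · subst h
        rw [show FS l 0 0 = {[]} from by simp [FS], Finset.mem_singleton]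
        constructor
        · rintro rfl; simp
        · rintro ⟨hlen, _, _⟩
          cases c with
          | nil => rfl
          | cons a t => simp at hlen
      · simp only [FS, if_neg h, Finset.notMem_empty, false_iff]
        rintro ⟨hlen, _, hsum⟩
        cases c with
        | nil => simp at hsum; exact h hsum.symm
        | cons a t => simp at hlen
  | succ k ih =>
      intro n c
      by_cases h : n = 0
      · subst h
        rw [show FS l (k+1) 0 = {[]} from by simp [FS], Finset.mem_singleton]
        constructor
        · rintro rfl; simp
        · rintro ⟨hlen, hx, hsum⟩
          cases c with
          | nil => rfl
          | cons a t =>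
              have ha := (hx a (by simp)).1
              simp only [List.sum_cons] at hsum
              omega
      · simp only [FS, if_neg h, Finset.mem_biUnion, Finset.mem_image, Finset.mem_Icc]
        constructor
        · rintro ⟨i, ⟨hi1, hi2⟩, d, hd, rfl⟩
          obtain ⟨hdl, hdx, hds⟩ := (ih _ d).mp hd
          have hin : i ≤ n := le_trans hi2 (min_le_right l n)
          refine ⟨by simpa using Nat.succ_le_succ hdl, ?_, ?_⟩
          · intro x hx
            rcases List.mem_cons.mp hx with rfl | hx'
            · exact ⟨hi1, le_trans hi2 (min_le_left _ _)⟩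
            · exact hdx x hx'
          · simp only [List.sum_cons, hds]
            omega
        · rintro ⟨hlen, hx, hsum⟩
          cases c with
          | nil =>
              simp only [List.sum_nil] at hsum
              exact absurd hsum.symm h
          | cons a t =>
              have ha := hx a (by simp)
              have hsum' : a + t.sum = n := by simpa using hsum
              refine ⟨a, ⟨ha.1, le_min ha.2 (by omega)⟩, t, ?_, rfl⟩
              apply (ih _ t).mpr
              exact ⟨by simpa using hlen, fun x hx' => hx x (by simp [hx']), by omega⟩

lemma card_FS (l : ℕ) : ∀ (k n : ℕ), (FS l k n).card = cN l k n := by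
  intro k
  induction k with
  | zero =>
      intro n
      by_cases h : n = 0 <;> simp [FS, cN, h]
  | succ k ih =>
      intro n
      by_cases h : n = 0
      · simp [FS, cN, h]
      · simp only [FS, cN, if_neg h]
        rw [Finset.card_biUnion]
        · apply Finset.sum_congr rfl
          intro i _
          rw [Finset.card_image_of_injective _ (List.cons_injective), ih]
        · intro x _ y _ hxy
          apply Finset.disjoint_left.mpr
          intro c hcx hcy
          obtain ⟨d, _, rfl⟩ := Finset.mem_image.mp hcx
          obtain ⟨e, _, hce⟩ := Finset.mem_image.mp hcy
          injection hce with h1 h2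
          exact hxy h1.symm

/-- `compCount k l n` is the number of compositions of `n` with at most `k`
parts, each part between `1` and `l`. -/
noncomputable def compCount (k l n : ℕ) : ℕ :=
  Nat.card {c : List ℕ // c.length ≤ k ∧ (∀ x ∈ c, 1 ≤ x ∧ x ≤ l) ∧ c.sum = n}

lemma compCount_eq_cN (k l n : ℕ) : compCount k l n = cN l k n := by
  rw [compCount]
  calc Nat.card {c : List ℕ // c.length ≤ k ∧ (∀ x ∈ c, 1 ≤ x ∧ x ≤ l) ∧ c.sum = n}
      = Nat.card {c : List ℕ // c ∈ FS l k n} :=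
        Nat.card_congr (Equiv.subtypeEquivRight fun c => (mem_FS l k n c).symm)
    _ = (FS l k n).card := Nat.card_eq_finsetCard _
    _ = cN l k n := card_FS l k n

theorem compCount_unimodal (k l : ℕ) (hk : 0 < k) (hl : 0 < l) :
    ∃ m ≤ k * l, (∀ i, i < m → compCount k l i ≤ compCount k l (i + 1)) ∧
      (∀ i, m ≤ i → i < k * l → compCount k l (i + 1) ≤ compCount k l i) := by
  obtain ⟨k', rfl⟩ : ∃ k', k = k' + 1 := ⟨k - 1, by omega⟩
  obtain ⟨t, ht, h1, h2⟩ := ssc l hl k'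
  have hlz : (1 : ℤ) ≤ (l : ℤ) := by exact_mod_cast hl
  have hK1 : (1 : ℤ) ≤ (((k' + 1) * l : ℕ) : ℤ) := by
    have : 1 ≤ (k' + 1) * l := Nat.one_le_iff_ne_zero.mpr (by positivity)
    exact_mod_cast this
  refine ⟨(min ((((k' + 1) * l : ℕ)) : ℤ) (t + 1)).toNat, ?_, ?_, ?_⟩
  · rw [Int.toNat_le]
    exact min_le_left _ _
  · intro i hi
    have hiZ : (i : ℤ) < min ((((k' + 1) * l : ℕ)) : ℤ) (t + 1) := Int.lt_toNat.mp hi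
    rw [compCount_eq_cN, compCount_eq_cN]
    have key : cZ l (k'+1) (i : ℤ) ≤ cZ l (k'+1) ((i : ℤ) + 1) := by
      rcases Nat.eq_zero_or_pos i with h0 | h0
      · subst h0
        simp only [Nat.cast_zero, cZ_zero, zero_add]
        exact cZ_pos l hl (k'+1) 1 (by norm_num) (by omega)
      · have e1 : cZ l (k'+1) ((i : ℤ) + 1) = Wf l k' (i : ℤ) := by
          have hh := cZ_eq_W l k' (m := (i : ℤ) + 1) (by positivity)
          simpa using hh
        have e2 : cZ l (k'+1) (i : ℤ) = Wf l k' ((i : ℤ) - 1) :=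
          cZ_eq_W l k' (by exact_mod_cast h0)
        have hd := Wf_diff l k' (i : ℤ)
        have hh := h1 (i : ℤ) (by omega)
        rw [e1, e2]
        linarith
    have : ((cN l (k'+1) i : ℤ)) ≤ ((cN l (k'+1) (i+1) : ℤ)) := by
      rw [← cZ_coe, ← cZ_coe]
      push_cast
      exact key
    exact_mod_cast this
  · intro i hmi hik
    have h1i : min ((((k' + 1) * l : ℕ)) : ℤ) (t + 1) ≤ (i : ℤ) := Int.toNat_le.mp hmi
    have hiK : (i : ℤ) < (((k' + 1) * l : ℕ) : ℤ) := by exact_mod_cast hik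
    have hti : t < (i : ℤ) := by omega
    have hi1 : 1 ≤ (i : ℤ) := by omega
    rw [compCount_eq_cN, compCount_eq_cN]
    have key : cZ l (k'+1) ((i : ℤ) + 1) ≤ cZ l (k'+1) (i : ℤ) := by
      have e1 : cZ l (k'+1) ((i : ℤ) + 1) = Wf l k' (i : ℤ) := by
        have hh := cZ_eq_W l k' (m := (i : ℤ) + 1) (by omega)
        simpa using hh
      have e2 : cZ l (k'+1) (i : ℤ) = Wf l k' ((i : ℤ) - 1) :=
        cZ_eq_W l k' (by omega)
      have hd := Wf_diff l k' (i : ℤ)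
      have hh := h2 (i : ℤ) hti
      rw [e1, e2]
      linarith
    have : ((cN l (k'+1) (i+1) : ℤ)) ≤ ((cN l (k'+1) i : ℤ)) := by
      rw [← cZ_coe, ← cZ_coe]
      push_cast
      exact key
    exact_mod_cast this
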